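/- Let A be a unital C*-algebra and {π_x : A → B(H_x)}_{x ∈ X} a family of unital *-representations on Hilbert spaces that is jointly isometric, i.e., ‖a‖ = sup_{x ∈ X} ‖π_x(a)‖ for every a ∈ A. Then a ∈ A is invertible in A if and only if π_x(a) is invertible for every x ∈ X and sup_{x ∈ X} ‖π_x(a)⁻¹‖ < ∞. -/

import Mathlib

lemma invLow {B : Type*} [CStarAlgebra B] [PartialOrder B] [StarOrderedRing B] {T : B}
    (hT : 0 ≤ T) (hTu : IsUnit T) {K : ℝ} (hK : 0 < K)
    (hinv : ‖Ring.inverse T‖ ≤ K) : algebraMap ℝ B K⁻¹ ≤ T := by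
  obtain ⟨u, rfl⟩ := hTu
  have hinv' : ‖(↑u⁻¹ : B)‖ ≤ K := by rwa [Ring.inverse_unit] at hinv
  have hu_inv_nonneg : (0 : B) ≤ ↑u⁻¹ := CFC.inv_nonneg_of_nonneg u hT
  have h1 : (↑u⁻¹ : B) ≤ algebraMap ℝ B K :=
    (CStarAlgebra.norm_le_iff_le_algebraMap _ hK.le hu_inv_nonneg).mp hinv'
  set k : Bˣ := (Units.map (algebraMap ℝ B : ℝ →+* B).toMonoidHom) (Units.mk0 K hK.ne') with hk
  have hkinv : ((k⁻¹ : Bˣ) : B) = algebraMap ℝ B K⁻¹ := by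
    rw [hk, ← map_inv]; simp
  have h2 := CStarAlgebra.inv_le_inv (a := u⁻¹) (b := k) hu_inv_nonneg (by exact h1)
  rw [inv_inv] at h2
  rwa [hkinv] at h2

lemma starMulSelfUnit {A : Type*} [CStarAlgebra A]
    {X : Type*} (H : X → Type*)
    [∀ x, NormedAddCommGroup (H x)] [∀ x, InnerProductSpace ℂ (H x)]
    [∀ x, CompleteSpace (H x)]
    (π : ∀ x, A →⋆ₐ[ℂ] (H x →L[ℂ] H x))
    (hiso : ∀ a : A, ‖a‖ = ⨆ x, ‖π x a‖) (a : A)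
    (h1 : ∀ x, IsUnit (π x a)) {C : ℝ} (hC0 : 0 < C)
    (hC : ∀ x, ‖Ring.inverse (π x a)‖ ≤ C) : IsUnit (star a * a) := by
  letI : PartialOrder A := CStarAlgebra.spectralOrder A
  haveI : StarOrderedRing A := CStarAlgebra.spectralOrderedRing A
  set K : ℝ := C ^ 2 with hKdef
  have hK : 0 < K := by positivity
  set b : A := star a * a with hbdef
  have hb : (0 : A) ≤ b := star_mul_self_nonneg a
  have hcomm : ∀ (r : ℝ) x, π x (algebraMap ℝ A r) = algebraMap ℝ _ r := fun r x => by
    rw [IsScalarTower.algebraMap_apply ℝ ℂ A, AlgHomClass.commutes,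
      ← IsScalarTower.algebraMap_apply ℝ ℂ _]
  have key : ∀ x, algebraMap ℝ _ K⁻¹ ≤ π x b := by
    intro x
    have hmap : π x b = star (π x a) * π x a := by rw [hbdef, map_mul, map_star]
    have hTu : IsUnit (π x b) := hmap ▸ ((h1 x).star.mul (h1 x))
    have hT0 : (0 : H x →L[ℂ] H x) ≤ π x b := hmap ▸ star_mul_self_nonneg (π x a)
    -- compute the inverse
    set S := π x a with hS
    set R := Ring.inverse S with hR
    have hRS : R * S = 1 := Ring.inverse_mul_cancel S (h1 x)
    have hSR : S * R = 1 := Ring.mul_inverse_cancel S (h1 x)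
    have hTinv : Ring.inverse (π x b) = R * star R := by
      have e1 : (R * star R) * (star S * S) = 1 := by
        rw [mul_assoc, ← mul_assoc (star R), ← star_mul, hSR, star_one, one_mul, hRS]
      have e2 : (star S * S) * (R * star R) = 1 := by
        rw [mul_assoc, ← mul_assoc S, hSR, one_mul, ← star_mul, hRS, star_one]
      set w : (H x →L[ℂ] H x)ˣ := ⟨star S * S, R * star R, e2, e1⟩ with hw
      have hwc : (w : H x →L[ℂ] H x) = star S * S := rfl
      rw [hmap, ← hwc, Ring.inverse_unit]
      rfl
    have hTnorm : ‖Ring.inverse (π x b)‖ ≤ K := by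
      rw [hTinv]
      calc ‖R * star R‖ ≤ ‖R‖ * ‖star R‖ := norm_mul_le _ _
        _ = ‖R‖ * ‖R‖ := by rw [norm_star]
        _ ≤ C * C := mul_le_mul (hC x) (hC x) (norm_nonneg _) hC0.le
        _ = K := by rw [hKdef, sq]
    exact invLow hT0 hTu hK hTnorm
  -- positivity of b - ε in A
  set ε : ℝ := K⁻¹ with hεdef
  have hε : 0 < ε := by positivity
  set s : A := b - algebraMap ℝ A ε with hsdef
  have hb_sa : IsSelfAdjoint b := IsSelfAdjoint.star_mul_self a
  have halg_sa : ∀ r : ℝ, IsSelfAdjoint (algebraMap ℝ A r) := fun r => by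
    rw [Algebra.algebraMap_eq_smul_one]
    exact IsSelfAdjoint.smul (show IsSelfAdjoint r from star_trivial r) (IsSelfAdjoint.one A)
  have hs_sa : IsSelfAdjoint s := hb_sa.sub (halg_sa ε)
  set r : ℝ := ‖s‖ with hrdef
  set t : A := algebraMap ℝ A r - s with htdef
  have ht0 : (0 : A) ≤ t := sub_nonneg.mpr hs_sa.le_algebraMap_norm_self
  have hπt_le : ∀ x, ‖π x t‖ ≤ r := by
    intro x
    have e1 : π x t = algebraMap ℝ _ r - π x s := by rw [htdef, map_sub, hcomm]
    have e2 : π x s = π x b - algebraMap ℝ _ ε := by rw [hsdef, map_sub, hcomm]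
    have h0s : (0 : H x →L[ℂ] H x) ≤ π x s := by
      rw [e2]; exact sub_nonneg.mpr (key x)
    have hsr : π x s ≤ algebraMap ℝ _ r :=
      (CStarAlgebra.norm_le_iff_le_algebraMap _ (norm_nonneg s) h0s).mp
        (NonUnitalStarAlgHom.norm_apply_le (π x) s)
    have h0t : (0 : H x →L[ℂ] H x) ≤ π x t := by rw [e1]; exact sub_nonneg.mpr hsr
    have htt : π x t ≤ algebraMap ℝ _ r := by rw [e1]; exact sub_le_self _ h0s
    exact (CStarAlgebra.norm_le_iff_le_algebraMap _ (norm_nonneg s) h0t).mpr htt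
  have ht_norm : ‖t‖ ≤ r := by
    rw [hiso t]; exact Real.iSup_le hπt_le (norm_nonneg s)
  have ht_le : t ≤ algebraMap ℝ A r :=
    (CStarAlgebra.norm_le_iff_le_algebraMap _ (norm_nonneg s) ht0).mp ht_norm
  have hs0 : (0 : A) ≤ s := by
    rw [htdef] at ht_le
    exact (sub_le_self_iff _).mp ht_le
  have hεb : algebraMap ℝ A ε ≤ b := by
    rw [hsdef] at hs0; exact sub_nonneg.mp hs0
  have hεu : IsUnit (algebraMap ℝ A ε) := (isUnit_iff_ne_zero.mpr hε.ne').map (algebraMap ℝ A)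
  have hε0 : (0 : A) ≤ algebraMap ℝ A ε := by
    rw [Algebra.algebraMap_eq_smul_one]
    exact smul_nonneg hε.le zero_le_one
  exact CStarAlgebra.isUnit_of_le _ hεb (hεu.isStrictlyPositive hε0)

lemma stmt6_aux {A : Type*} [CStarAlgebra A]
    {X : Type*} (H : X → Type*)
    [∀ x, NormedAddCommGroup (H x)] [∀ x, InnerProductSpace ℂ (H x)]
    [∀ x, CompleteSpace (H x)]
    (π : ∀ x, A →⋆ₐ[ℂ] (H x →L[ℂ] H x))
    (hiso : ∀ a : A, ‖a‖ = ⨆ x, ‖π x a‖) (a : A) :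
    IsUnit a ↔ ((∀ x, IsUnit (π x a)) ∧ ∃ C : ℝ, ∀ x, ‖Ring.inverse (π x a)‖ ≤ C) := by
  constructor
  · rintro ⟨u, rfl⟩
    refine ⟨fun x => u.isUnit.map (π x), ‖(↑u⁻¹ : A)‖, fun x => ?_⟩
    have e1 : π x ↑u * π x ↑u⁻¹ = 1 := by rw [← map_mul, u.mul_inv, map_one]
    have e2 : π x ↑u⁻¹ * π x ↑u = 1 := by rw [← map_mul, u.inv_mul, map_one]
    set w : (H x →L[ℂ] H x)ˣ := ⟨π x ↑u, π x ↑u⁻¹, e1, e2⟩ with hw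
    have hwc : (w : H x →L[ℂ] H x) = π x ↑u := rfl
    rw [← hwc, Ring.inverse_unit]
    exact NonUnitalStarAlgHom.norm_apply_le (π x) _
  · rintro ⟨h1, C, hC⟩
    set C' : ℝ := max C 1 with hC'
    have hC0 : 0 < C' := lt_of_lt_of_le one_pos (le_max_right C 1)
    have hC1 : ∀ x, ‖Ring.inverse (π x a)‖ ≤ C' := fun x => (hC x).trans (le_max_left C 1)
    have hu1 : IsUnit (star a * a) := starMulSelfUnit H π hiso a h1 hC0 hC1
    have hu2 : IsUnit (a * star a) := by
      have h1' : ∀ x, IsUnit (π x (star a)) := fun x => by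
        rw [map_star]; exact (h1 x).star
      have hC1' : ∀ x, ‖Ring.inverse (π x (star a))‖ ≤ C' := fun x => by
        rw [map_star, Ring.inverse_star, norm_star]; exact hC1 x
      simpa [star_star] using starMulSelfUnit H π hiso (star a) h1' hC0 hC1'
    set l : A := Ring.inverse (star a * a) * star a with hl
    set rr : A := star a * Ring.inverse (a * star a) with hrr
    have hla : l * a = 1 := by
      rw [hl, mul_assoc, Ring.inverse_mul_cancel _ hu1]
    have har : a * rr = 1 := by
      rw [hrr, ← mul_assoc, Ring.mul_inverse_cancel _ hu2]
    have hlr : l = rr := by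
      calc l = l * (a * rr) := by rw [har, mul_one]
        _ = (l * a) * rr := (mul_assoc l a rr).symm
        _ = rr := by rw [hla, one_mul]
    exact ⟨⟨a, rr, har, hlr ▸ hla⟩, rfl⟩

/-- For a jointly isometric family of unital *-representations `π_x` of a unital
C*-algebra `A` on Hilbert spaces `H x`, an element `a` is invertible in `A` if and
only if every `π_x a` is invertible with uniformly bounded inverses. -/
theorem stmt6 {A : Type*} [NormedRing A] [StarRing A] [CStarRing A] [CompleteSpace A]
    [NormedAlgebra ℂ A] [StarModule ℂ A]
    {X : Type*} (H : X → Type*)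
    [∀ x, NormedAddCommGroup (H x)] [∀ x, InnerProductSpace ℂ (H x)]
    [∀ x, CompleteSpace (H x)]
    (π : ∀ x, A →⋆ₐ[ℂ] (H x →L[ℂ] H x))
    (hiso : ∀ a : A, ‖a‖ = ⨆ x, ‖π x a‖) (a : A) :
    IsUnit a ↔ ((∀ x, IsUnit (π x a)) ∧ ∃ C : ℝ, ∀ x, ‖Ring.inverse (π x a)‖ ≤ C) := by
  letI : CStarAlgebra A :=
    { ‹NormedRing A›, ‹StarRing A›, ‹CStarRing A›, ‹CompleteSpace A›,
      ‹NormedAlgebra ℂ A›, ‹StarModule ℂ A› with }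
  exact stmt6_aux H π hiso a
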